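/- Let G be a graph whose vertex set is ordered by a linear order u_1, …, u_n, and let Z be the set of vertices u_i such that u_i is NOT the unique neighbor within {u_i, …, u_n} of some vertex u_j with j < i. Then Z is a zero forcing set of G. -/
import Mathlib


namespace SimpleGraph

variable {V : Type*}

/-- `G.ZeroForces Z v` : vertex `v` is eventually colored when starting from `Z`
and iteratively adding any vertex that is the unique uncolored neighbor of a colored vertex. -/
inductive ZeroForces (G : SimpleGraph V) (Z : Set V) : V → Prop
  | base {v : V} : v ∈ Z → ZeroForces G Z v
  | force {v u : V} : ZeroForces G Z v → G.Adj v u →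
      (∀ w, G.Adj v w → w ≠ u → ZeroForces G Z w) → ZeroForces G Z u

/-- The forcing closure `F(Z)`. -/
def zfClosure (G : SimpleGraph V) (Z : Set V) : Set V := {v | G.ZeroForces Z v}

/-- `Z` is a zero forcing set of `G`. -/
def IsZeroForcingSet (G : SimpleGraph V) (Z : Set V) : Prop := ∀ v, G.ZeroForces Z v

/-- The zero forcing number `Z(G)`. -/
noncomputable def zeroForcingNumber (G : SimpleGraph V) [Fintype V] : ℕ :=
  sInf {k | ∃ Z : Finset V, Z.card = k ∧ G.IsZeroForcingSet ↑Z}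

end SimpleGraph
theorem stmt6 {V : Type*} [Fintype V] [LinearOrder V] (G : SimpleGraph V) :
    G.IsZeroForcingSet
      {v : V | ¬ ∃ w, w < v ∧ G.Adj w v ∧ ∀ x, v ≤ x → G.Adj w x → x = v} := by
  intro v
  induction v using WellFoundedLT.induction with
  | _ v ih =>
    by_cases hv : ∃ w, w < v ∧ G.Adj w v ∧ ∀ x, v ≤ x → G.Adj w x → x = v
    · obtain ⟨w, hwv, hadj, huniq⟩ := hv
      exact SimpleGraph.ZeroForces.force (ih w hwv) hadj fun x hx hne =>
        ih x (lt_of_not_ge fun hle => hne (huniq x hle hx))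
    · exact SimpleGraph.ZeroForces.base hv
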